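/- An online algorithm for the ordinal matroid secretary problem is α ordinal-competitive (i.e., E[w(ALG)] ≥ w(OPT)/α for every nonnegative weight function w compatible with the value order) if and only if for every k ∈ [n], E[|ALG ∩ R^k|] ≥ |OPT ∩ R^k| / α, where R^k denotes the top k elements of R in the value order. -/
import Mathlib


open Finset

/-- The top `k` elements `R^k = {r^1, …, r^n}` of the ground set `Fin n`,
where smaller index means higher in the value order (`r^1 ≻ ⋯ ≻ r^n`). -/
def topk (n k : ℕ) : Finset (Fin n) := Finset.univ.filter fun i => (i : ℕ) < k

private lemma abel_sum {n : ℕ} (w : Fin n → ℝ) (S : Finset (Fin n)) :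
    ∑ i ∈ S, w i =
      ∑ k ∈ Finset.range n,
        ((if h : k < n then w ⟨k, h⟩ else 0) - (if h : k + 1 < n then w ⟨k + 1, h⟩ else 0)) *
          ((S ∩ topk n (k + 1)).card : ℝ) := by
  set w' : ℕ → ℝ := fun k => if h : k < n then w ⟨k, h⟩ else 0 with hw'
  have key : ∀ i : Fin n, w i = ∑ k ∈ Finset.Ico (i : ℕ) n, (w' k - w' (k + 1)) := by
    intro i
    rw [Finset.sum_Ico_eq_sub _ i.2.le, Finset.sum_range_sub' w', Finset.sum_range_sub' w']
    have hn : w' n = 0 := by simp [hw']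
    have hi : w' (i : ℕ) = w i := by simp [hw', i.2]
    rw [hn, hi]; ring
  calc ∑ i ∈ S, w i
      = ∑ i ∈ S, ∑ k ∈ Finset.range n, (if (i : ℕ) ≤ k then w' k - w' (k + 1) else 0) := by
        refine Finset.sum_congr rfl fun i _ => ?_
        rw [key i, ← Finset.sum_filter]
        have hset : (Finset.range n).filter (fun k => (i : ℕ) ≤ k) = Finset.Ico (i : ℕ) n := by
          refine Finset.ext fun k => ?_
          simp [Finset.mem_Ico, and_comm]
        rw [hset]
    _ = ∑ k ∈ Finset.range n, ∑ i ∈ S, (if (i : ℕ) ≤ k then w' k - w' (k + 1) else 0) :=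
        Finset.sum_comm
    _ = ∑ k ∈ Finset.range n, (w' k - w' (k + 1)) * ((S ∩ topk n (k + 1)).card : ℝ) := by
        refine Finset.sum_congr rfl fun k _ => ?_
        have hset2 : S.filter (fun i : Fin n => (i : ℕ) ≤ k) = S ∩ topk n (k + 1) :=
          Finset.ext fun i => by simp [topk, Nat.lt_succ_iff, and_comm]
        rw [Finset.sum_ite, Finset.sum_const_zero, add_zero, Finset.sum_const, nsmul_eq_mul,
          mul_comm, hset2]

theorem ordinal_competitive_iff_topk {n : ℕ} {Ω : Type*} [Fintype Ω]
    (μ : Ω → ℝ) (hμ0 : ∀ ω, 0 ≤ μ ω) (hμ1 : ∑ ω, μ ω = 1)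
    (ALG : Ω → Finset (Fin n)) (OPT : Finset (Fin n))
    (a : ℝ) (ha : 1 ≤ a) :
    (∀ w : Fin n → ℝ, (∀ i, 0 ≤ w i) → (∀ i j : Fin n, i ≤ j → w j ≤ w i) →
        (∑ i ∈ OPT, w i) / a ≤ ∑ ω, μ ω * ∑ i ∈ ALG ω, w i) ↔
    (∀ k, 1 ≤ k → k ≤ n →
        ((OPT ∩ topk n k).card : ℝ) / a ≤ ∑ ω, μ ω * ((ALG ω ∩ topk n k).card : ℝ)) := by
  constructor
  · intro h k hk1 hkn
    have := h (fun i => if (i : ℕ) < k then 1 else 0)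
      (fun i => by positivity)
      (fun i j hij => by
        by_cases hj : (j : ℕ) < k
        · simp [hj, lt_of_le_of_lt (Nat.le_of_succ_le_succ (Nat.succ_le_succ hij)) hj,
            Fin.le_def.mp hij |>.trans_lt hj]
        · simp only [hj, if_false]; positivity)
    have hcard : ∀ S : Finset (Fin n),
        (∑ i ∈ S, (if (i : ℕ) < k then (1 : ℝ) else 0)) = ((S ∩ topk n k).card : ℝ) := by
      intro S
      rw [Finset.sum_ite, Finset.sum_const_zero, add_zero, Finset.sum_const, nsmul_eq_mul,
        mul_one]
      congr 2
      ext i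
      simp [topk, Finset.mem_filter]
    rw [hcard] at this
    simpa only [hcard] using this
  · intro h w hw0 hwmono
    rw [abel_sum w OPT, Finset.sum_div]
    have swap : ∑ ω, μ ω * ∑ i ∈ ALG ω, w i
        = ∑ k ∈ Finset.range n,
          ((if h : k < n then w ⟨k, h⟩ else 0) - (if h : k + 1 < n then w ⟨k + 1, h⟩ else 0)) *
            ∑ ω, μ ω * ((ALG ω ∩ topk n (k + 1)).card : ℝ) := by
      simp_rw [fun ω => abel_sum w (ALG ω), Finset.mul_sum]
      rw [Finset.sum_comm]
      refine Finset.sum_congr rfl fun k _ => ?_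
      exact Finset.sum_congr rfl fun ω _ => by ring
    rw [swap]
    refine Finset.sum_le_sum fun k hk => ?_
    rw [Finset.mem_range] at hk
    have hd : 0 ≤ (if h : k < n then w ⟨k, h⟩ else 0) -
        (if h : k + 1 < n then w ⟨k + 1, h⟩ else 0) := by
      rw [sub_nonneg]
      by_cases h1 : k + 1 < n
      · simp only [hk, h1, dif_pos]
        exact hwmono _ _ (by simp [Fin.le_def])
      · simp only [h1, dif_neg, not_false_iff, hk, dif_pos]
        exact hw0 _
    rw [mul_div_assoc]
    exact mul_le_mul_of_nonneg_left (h (k + 1) (Nat.succ_le_succ (Nat.zero_le k)) hk) hd
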